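/- arXiv:1912.05068 — 2 statements merged into one kernel-verified Lean document; each statement's English description precedes it below -/
import Mathlib

section
/- Same support sets: suppose x ∈ ℝⁿ has γ_A(x) > 0 and a support set S ⊆ A, i.e. x = Σ_{a∈S} ĉ_a·a with ĉ_a > 0 and Σ_{a∈S} ĉ_a = γ_A(x). If v = Σ_{a∈S} c_a·a with c_a ≥ 0, then γ_A(v) = Σ_{a∈S} c_a. -/
open scoped RealInnerProductSpace

/-- The atomic gauge: infimum of `Σ c_a` over finitely supported conic decompositions
`x = Σ c_a • a` with atoms in `A` and `c_a ≥ 0`. -/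
noncomputable def atomicGauge {n : ℕ} (A : Set (EuclideanSpace ℝ (Fin n)))
    (x : EuclideanSpace ℝ (Fin n)) : EReal :=
  sInf {s : EReal | ∃ c : EuclideanSpace ℝ (Fin n) →₀ ℝ,
    (∀ a, 0 ≤ c a) ∧ ↑c.support ⊆ A ∧ (c.sum fun a r => r • a) = x ∧
      s = ((c.sum fun _ r => r : ℝ) : EReal)}

lemma gauge_le_aux {n : ℕ} (A : Set (EuclideanSpace ℝ (Fin n)))
    (S : Finset (EuclideanSpace ℝ (Fin n))) (hSA : ↑S ⊆ A)
    (c : EuclideanSpace ℝ (Fin n) → ℝ) (hc : ∀ a ∈ S, 0 ≤ c a) :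
    atomicGauge A (∑ a ∈ S, c a • a) ≤ ((∑ a ∈ S, c a : ℝ) : EReal) := by
  classical
  apply sInf_le
  refine ⟨Finsupp.indicator S (fun a _ => c a), ?_, ?_, ?_, ?_⟩
  · intro a
    rw [Finsupp.indicator_apply]
    split
    · exact hc a ‹_›
    · exact le_rfl
  · exact fun a ha => hSA (Finsupp.support_indicator_subset _ _ ha)
  · rw [Finsupp.sum_of_support_subset _ (Finsupp.support_indicator_subset _ _) _
      (fun a _ => zero_smul ℝ a)]
    exact Finset.sum_congr rfl fun a ha => by rw [Finsupp.indicator_of_mem ha]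
  · rw [Finsupp.sum_of_support_subset _ (Finsupp.support_indicator_subset _ _) _
      (fun a _ => rfl)]
    norm_cast
    exact (Finset.sum_congr rfl fun a ha => by rw [Finsupp.indicator_of_mem ha]).symm

/-- Same support sets: if `S` is a support set for `x` (positive coefficients summing to the
gauge value), then any conic combination `v` of the atoms in `S` has gauge value equal to its
coefficient sum. -/
theorem same_support_sets {n : ℕ} (A : Set (EuclideanSpace ℝ (Fin n)))
    (x v : EuclideanSpace ℝ (Fin n))
    (S : Finset (EuclideanSpace ℝ (Fin n))) (hSA : ↑S ⊆ A)
    (chat : EuclideanSpace ℝ (Fin n) → ℝ)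
    (hchat : ∀ a ∈ S, 0 < chat a)
    (hxdec : (∑ a ∈ S, chat a • a) = x)
    (hxgauge : ((∑ a ∈ S, chat a : ℝ) : EReal) = atomicGauge A x)
    (hpos : (0 : EReal) < atomicGauge A x)
    (c : EuclideanSpace ℝ (Fin n) → ℝ) (hc : ∀ a ∈ S, 0 ≤ c a)
    (hv : (∑ a ∈ S, c a • a) = v) :
    atomicGauge A v = ((∑ a ∈ S, c a : ℝ) : EReal) := by
  classical
  refine le_antisymm (by rw [← hv]; exact gauge_le_aux A S hSA c hc) ?_
  apply le_sInf
  rintro s ⟨d, hd0, hdA, hdv, rfl⟩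
  rw [EReal.coe_le_coe_iff]
  by_contra hlt
  push_neg at hlt
  have hSne : S.Nonempty := by
    by_contra hS
    rw [Finset.not_nonempty_iff_eq_empty] at hS
    subst hS
    simp only [Finset.sum_empty, EReal.coe_zero] at hxgauge
    rw [← hxgauge] at hpos
    exact lt_irrefl _ hpos
  set t : ℝ := S.inf' hSne fun a => chat a / (c a + 1) with ht
  have ht0 : 0 < t := by
    rw [ht, Finset.lt_inf'_iff]
    intro a ha
    have := hchat a ha
    have := hc a ha
    positivity
  have htc : ∀ a ∈ S, t * c a ≤ chat a := by
    intro a ha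
    have h1 : t ≤ chat a / (c a + 1) := Finset.inf'_le _ ha
    have hca := hc a ha
    have h2 : t * (c a + 1) ≤ chat a := (le_div_iff₀ (by linarith)).mp h1
    nlinarith
  set f : EuclideanSpace ℝ (Fin n) →₀ ℝ :=
    Finsupp.indicator S (fun a _ => chat a - t * c a) with hf
  set e : EuclideanSpace ℝ (Fin n) →₀ ℝ := f + t • d with he
  have hsmul0 : ∀ a : EuclideanSpace ℝ (Fin n), (0 : ℝ) • a = 0 := fun a => zero_smul ℝ a
  have hfsum : (f.sum fun a r => r • a) = x - t • v := by
    rw [hf, Finsupp.sum_of_support_subset _ (Finsupp.support_indicator_subset _ _) _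
      (fun a _ => zero_smul ℝ a)]
    rw [← hxdec, ← hv, Finset.smul_sum, ← Finset.sum_sub_distrib]
    refine Finset.sum_congr rfl fun a ha => ?_
    rw [Finsupp.indicator_of_mem ha, sub_smul, mul_smul]
  have hfcoef : (f.sum fun _ r => r) = (∑ a ∈ S, chat a) - t * ∑ a ∈ S, c a := by
    rw [hf, Finsupp.sum_of_support_subset _ (Finsupp.support_indicator_subset _ _) _
      (fun a _ => rfl), Finset.mul_sum, ← Finset.sum_sub_distrib]
    exact Finset.sum_congr rfl fun a ha => by rw [Finsupp.indicator_of_mem ha]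
  have htdsum : ((t • d).sum fun a r => r • a) = t • v := by
    rw [Finsupp.sum_smul_index' (fun a => zero_smul ℝ a), ← hdv, Finsupp.smul_sum]
    exact Finsupp.sum_congr fun a _ => by rw [smul_eq_mul, ← smul_smul]
  have htdcoef : ((t • d).sum fun _ r => r) = t * (d.sum fun _ r => r) := by
    rw [Finsupp.sum_smul_index' (fun _ => rfl), Finsupp.mul_sum]
    exact Finsupp.sum_congr fun a _ => rfl
  have hmem : atomicGauge A x ≤ ((e.sum fun _ r => r : ℝ) : EReal) := by
    apply sInf_le
    refine ⟨e, ?_, ?_, ?_, rfl⟩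
    · intro a
      rw [he, Finsupp.add_apply, Finsupp.smul_apply, smul_eq_mul]
      have h1 : 0 ≤ f a := by
        rw [hf, Finsupp.indicator_apply]
        split
        · have := htc a ‹_›; linarith
        · exact le_rfl
      have h2 : 0 ≤ t * d a := mul_nonneg ht0.le (hd0 a)
      linarith
    · intro a ha
      have ha' : a ∈ f.support ∪ (t • d).support :=
        Finsupp.support_add (Finset.mem_coe.mp ha)
      rcases Finset.mem_union.mp ha' with h | h
      · exact hSA (Finsupp.support_indicator_subset _ _ h)
      · exact hdA (Finsupp.support_smul h)
    · rw [he, Finsupp.sum_add_index' (fun a => zero_smul ℝ a)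
        (fun a r₁ r₂ => add_smul r₁ r₂ a), hfsum, htdsum]
      abel
  have hesum : (e.sum fun _ r => r) =
      (∑ a ∈ S, chat a) - t * (∑ a ∈ S, c a) + t * (d.sum fun _ r => r) := by
    rw [he, Finsupp.sum_add_index' (fun _ => rfl) (fun _ r₁ r₂ => rfl), hfcoef, htdcoef]
  rw [hesum, ← hxgauge, EReal.coe_le_coe_iff] at hmem
  nlinarith
end

section
/- Polar duality optimality: let C ⊆ ℝⁿ be a closed convex set containing the origin and D ⊆ ℝⁿ \ {0} a closed convex set with antipolar D' = {z : ⟨x, z⟩ ≥ 1 for all x ∈ D}. If x ∈ D, z ∈ D', ⟨x, z⟩ = 1, and ⟨x, z⟩ = γ_C(x)·σ_C(z), then x minimizes γ_C over D and z minimizes σ_C over D'. -/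
open scoped RealInnerProductSpace Pointwise

noncomputable def supportFn {n : ℕ} (C : Set (EuclideanSpace ℝ (Fin n)))
    (z : EuclideanSpace ℝ (Fin n)) : EReal :=
  sSup ((fun x => ((⟪x, z⟫ : ℝ) : EReal)) '' C)

noncomputable def gaugeE {n : ℕ} (C : Set (EuclideanSpace ℝ (Fin n)))
    (x : EuclideanSpace ℝ (Fin n)) : EReal :=
  sInf ((fun r : ℝ => (r : EReal)) '' {r : ℝ | 0 ≤ r ∧ x ∈ r • C})

def antipolar {n : ℕ} (D : Set (EuclideanSpace ℝ (Fin n))) : Set (EuclideanSpace ℝ (Fin n)) :=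
  {z | ∀ x ∈ D, 1 ≤ ⟪x, z⟫}

lemma supportFn_nonneg {n : ℕ} {C : Set (EuclideanSpace ℝ (Fin n))}
    (h0 : (0 : EuclideanSpace ℝ (Fin n)) ∈ C) (z : EuclideanSpace ℝ (Fin n)) :
    (0 : EReal) ≤ supportFn C z := by
  have : ((⟪(0 : EuclideanSpace ℝ (Fin n)), z⟫ : ℝ) : EReal) ≤ supportFn C z :=
    le_sSup ⟨0, h0, rfl⟩
  simpa using this

lemma gaugeE_nonneg {n : ℕ} (C : Set (EuclideanSpace ℝ (Fin n)))
    (x : EuclideanSpace ℝ (Fin n)) : (0 : EReal) ≤ gaugeE C x := by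
  refine le_sInf ?_
  rintro _ ⟨r, ⟨hr, -⟩, rfl⟩
  show (0 : EReal) ≤ (r : EReal)
  exact_mod_cast hr

lemma supportFn_le {n : ℕ} {C : Set (EuclideanSpace ℝ (Fin n))}
    {c : EuclideanSpace ℝ (Fin n)} (hc : c ∈ C) (z : EuclideanSpace ℝ (Fin n)) :
    ((⟪c, z⟫ : ℝ) : EReal) ≤ supportFn C z :=
  le_sSup ⟨c, hc, rfl⟩

/-- Polar duality optimality: if `x ∈ D`, `z ∈ D'`, `⟨x,z⟩ = 1`, and `(x,z)` is `C`-aligned,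
then `x` minimizes `γ_C` over `D` and `z` minimizes `σ_C` over `D'`. -/
theorem polar_duality_optimality {n : ℕ} (C : Set (EuclideanSpace ℝ (Fin n)))
    (hC : IsClosed C) (hCconv : Convex ℝ C) (h0 : (0 : EuclideanSpace ℝ (Fin n)) ∈ C)
    (D : Set (EuclideanSpace ℝ (Fin n)))
    (hD : IsClosed D) (hDconv : Convex ℝ D) (hD0 : (0 : EuclideanSpace ℝ (Fin n)) ∉ D)
    (x z : EuclideanSpace ℝ (Fin n)) (hx : x ∈ D) (hz : z ∈ antipolar D)
    (hip : ⟪x, z⟫ = 1)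
    (halign : ((⟪x, z⟫ : ℝ) : EReal) = gaugeE C x * supportFn C z) :
    (∀ y ∈ D, gaugeE C x ≤ gaugeE C y) ∧ (∀ w ∈ antipolar D, supportFn C z ≤ supportFn C w) := by
  have ha0 : (0 : EReal) ≤ gaugeE C x := gaugeE_nonneg C x
  have hb0 : (0 : EReal) ≤ supportFn C z := supportFn_nonneg h0 z
  have hab : (1 : EReal) = gaugeE C x * supportFn C z := by
    rw [hip] at halign; exact_mod_cast halign
  -- gaugeE C x and supportFn C z are finite
  have haT : gaugeE C x ≠ ⊤ := by
    intro h
    rw [h] at hab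
    rcases eq_or_lt_of_le hb0 with hb | hb
    · rw [← hb, mul_zero] at hab; simp at hab
    · rw [EReal.top_mul_of_pos hb] at hab; exact (EReal.coe_ne_top 1) (by exact_mod_cast hab)
  have hbT : supportFn C z ≠ ⊤ := by
    intro h
    rw [h] at hab
    rcases eq_or_lt_of_le ha0 with ha | ha
    · rw [← ha, zero_mul] at hab; simp at hab
    · rw [EReal.mul_top_of_pos ha] at hab; exact (EReal.coe_ne_top 1) (by exact_mod_cast hab)
  have haB : gaugeE C x ≠ ⊥ := ne_of_gt (lt_of_lt_of_le (by simp) ha0)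
  have hbB : supportFn C z ≠ ⊥ := ne_of_gt (lt_of_lt_of_le (by simp) hb0)
  obtain ⟨g, hg⟩ : ∃ g : ℝ, gaugeE C x = (g : EReal) :=
    ⟨(gaugeE C x).toReal, (EReal.coe_toReal haT haB).symm⟩
  obtain ⟨s, hs⟩ : ∃ s : ℝ, supportFn C z = (s : EReal) :=
    ⟨(supportFn C z).toReal, (EReal.coe_toReal hbT hbB).symm⟩
  have hgs : g * s = 1 := by
    rw [hg, hs, ← EReal.coe_mul] at hab
    exact_mod_cast hab.symm
  have hg0 : 0 ≤ g := by rw [hg] at ha0; exact_mod_cast ha0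
  have hs0 : 0 ≤ s := by rw [hs] at hb0; exact_mod_cast hb0
  have hspos : 0 < s := by
    rcases hs0.lt_or_eq with h | h
    · exact h
    · exfalso; rw [← h, mul_zero] at hgs; exact zero_ne_one hgs
  have hgpos : 0 < g := by
    rcases hg0.lt_or_eq with h | h
    · exact h
    · exfalso; rw [← h, zero_mul] at hgs; exact zero_ne_one hgs
  constructor
  · -- minimize gauge over D
    intro y hy
    rw [hg]
    refine le_sInf ?_
    rintro _ ⟨r, ⟨hr0, hyr⟩, rfl⟩
    obtain ⟨c, hc, rfl⟩ := hyr
    have hcz : ⟪c, z⟫ ≤ s := by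
      have h' := supportFn_le hc z
      rw [hs] at h'
      exact_mod_cast h'
    have h1 : (1 : ℝ) ≤ r * s := by
      have h1' : (1 : ℝ) ≤ ⟪r • c, z⟫ := hz _ hy
      rw [real_inner_smul_left] at h1'
      exact h1'.trans (mul_le_mul_of_nonneg_left hcz hr0)
    have hgr : g ≤ r := by
      by_contra h
      push_neg at h
      have : r * s < g * s := mul_lt_mul_of_pos_right h hspos
      rw [hgs] at this
      linarith
    show (g : EReal) ≤ (r : EReal)
    exact_mod_cast hgr
  · -- minimize support over antipolar D
    intro w hw
    by_contra hcon
    push_neg at hcon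
    rw [hs] at hcon
    have hw0 : (0 : EReal) ≤ supportFn C w := supportFn_nonneg h0 w
    have hwT : supportFn C w ≠ ⊤ := ne_top_of_lt hcon
    have hwB : supportFn C w ≠ ⊥ := ne_of_gt (lt_of_lt_of_le (by simp) hw0)
    obtain ⟨b', hb'⟩ : ∃ b' : ℝ, supportFn C w = (b' : EReal) :=
      ⟨(supportFn C w).toReal, (EReal.coe_toReal hwT hwB).symm⟩
    have hb'0 : 0 ≤ b' := by rw [hb'] at hw0; exact_mod_cast hw0
    have hb's : b' < s := by rw [hb'] at hcon; exact_mod_cast hcon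
    -- the gauge index set of x is nonempty
    have hlt : gaugeE C x < ((g + 1 : ℝ) : EReal) := by
      rw [hg]; exact_mod_cast (by linarith : g < g + 1)
    obtain ⟨_, ⟨r₀, ⟨hr₀0, hxr₀⟩, rfl⟩, -⟩ := sInf_lt_iff.mp hlt
    -- every r in the gauge set of x satisfies 1 ≤ r * b'
    have key : ∀ r : ℝ, 0 ≤ r → x ∈ r • C → (1 : ℝ) ≤ r * b' := by
      intro r hr0 hxr
      obtain ⟨c, hc, hrc⟩ := hxr
      have hcw : ⟪c, w⟫ ≤ b' := by
        have h' := supportFn_le hc w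
        rw [hb'] at h'
        exact_mod_cast h'
      have h1' : (1 : ℝ) ≤ ⟪x, w⟫ := hw _ hx
      rw [← hrc, real_inner_smul_left] at h1'
      exact h1'.trans (mul_le_mul_of_nonneg_left hcw hr0)
    have hb'pos : 0 < b' := by
      rcases hb'0.lt_or_eq with h | h
      · exact h
      · exfalso
        have hk := key r₀ hr₀0 hxr₀
        rw [← h, mul_zero] at hk
        linarith
    -- hence gaugeE C x ≥ 1 / b' > g, contradiction
    have hge : ((1 / b' : ℝ) : EReal) ≤ gaugeE C x := by
      refine le_sInf ?_
      rintro _ ⟨r, ⟨hr0, hxr⟩, rfl⟩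
      have h1 := key r hr0 hxr
      have hr' : 1 / b' ≤ r := by
        rw [div_le_iff₀ hb'pos]
        linarith
      show ((1 / b' : ℝ) : EReal) ≤ (r : EReal)
      exact_mod_cast hr'
    rw [hg] at hge
    have hle : (1 / b' : ℝ) ≤ g := by exact_mod_cast hge
    have hlt2 : g < 1 / b' := by
      rw [lt_div_iff₀ hb'pos]
      calc g * b' < g * s := mul_lt_mul_of_pos_left hb's hgpos
        _ = 1 := hgs
    linarith
end
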